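/- For a connected cubic plane graph Γ, if any one of its state-graph surfaces (obtained from the ribbon-graph structure of Γ by introducing half-twists on an arbitrary subset of the edge-ribbons and capping boundary circles with disks) admits a proper 4-face-coloring, then Γ itself admits a proper 4-face-coloring. -/

import Mathlib

/-!
A combinatorial map (rotation system): darts `D`, vertex rotation `σ`,
edge involution `α` (fixed-point free).  Vertices are the cycles of `σ`,
edges the cycles of `α`, and faces the cycles of `φ = σ * α`.
Planarity of a connected map is expressed by Euler's formula `V + F = E + 2`.
-/

structure CombMap where
  D : Type
  [fin : Fintype D]
  [deq : DecidableEq D]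
  σ : Equiv.Perm D
  α : Equiv.Perm D
  α_invol : ∀ d, α (α d) = d
  α_fpf : ∀ d, α d ≠ d

attribute [instance] CombMap.fin CombMap.deq

namespace CombMap

variable (M : CombMap)

/-- The face permutation. -/
def φ : Equiv.Perm M.D := M.σ * M.α

/-- Every vertex is trivalent. -/
def Cubic : Prop := (∀ d, M.σ (M.σ (M.σ d)) = d) ∧ ∀ d, M.σ d ≠ d

/-- The map is connected. -/
def Connected : Prop :=
  ∀ d e : M.D, Relation.ReflTransGen (fun x y => M.σ x = y ∨ M.α x = y) d e

def sameCycleSetoid (f : Equiv.Perm M.D) : Setoid M.D where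
  r := f.SameCycle
  iseqv := ⟨fun x => Equiv.Perm.SameCycle.refl f x, fun h => h.symm, fun h h' => h.trans h'⟩

/-- The number of cycles (orbits) of a permutation of the darts. -/
noncomputable def numCycles (f : Equiv.Perm M.D) : ℕ := Nat.card (Quotient (M.sameCycleSetoid f))

/-- A connected map is planar iff Euler's formula `V - E + F = 2` holds. -/
def Planar : Prop :=
  M.Connected ∧ M.numCycles M.σ + M.numCycles M.φ = M.numCycles M.α + 2

/-- No edge has the same face on both of its sides (for a plane graph this
is equivalent to having no bridge). -/
def Bridgeless : Prop := ∀ d, ¬ M.φ.SameCycle d (M.α d)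

/-- A proper `n`-face-coloring, encoded as a function on darts that is
constant on faces and assigns different colors to the two sides of each edge. -/
def FaceColoring (n : ℕ) (c : M.D → Fin n) : Prop :=
  (∀ d, c (M.φ d) = c d) ∧ ∀ d, c d ≠ c (M.α d)

/-- A proper `n`-edge-coloring, encoded as a function on darts that is
constant on edges and assigns different colors to distinct edges at a vertex. -/
def EdgeColoring (n : ℕ) (c : M.D → Fin n) : Prop :=
  (∀ d, c (M.α d) = c d) ∧ ∀ d, c d ≠ c (M.σ d)

end CombMap


namespace CombMap
variable (M : CombMap)

/-!
State graphs.  For a twist assignment `t` on the edges (a half-twisted band where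
`t = true`), the faces of the resulting state-graph surface are the boundary
circles of the twisted ribbon graph.  We traverse these circles through the
boundary *segments* `M.D × Bool` (the two band-side pieces at each dart): `nextSeg`
moves along a circle across an edge band and around a vertex disk, and `sideMate`
identifies the two halves of one and the same band side.
-/

/-- One step along a boundary circle of the twisted ribbon graph. -/
def nextSeg (t : M.D → Bool) (x : M.D × Bool) : M.D × Bool :=
  if Bool.xor x.2 (!(t x.1)) then (M.σ (M.α x.1), false) else (M.σ⁻¹ (M.α x.1), true)

/-- The other half of the same band side. -/
def sideMate (t : M.D → Bool) (x : M.D × Bool) : M.D × Bool :=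
  (M.α x.1, Bool.xor x.2 (!(t x.1)))

/-- A proper `n`-face-coloring of the state graph `Γ_t`: a coloring of the boundary
circles (encoded on segments, constant along each circle) such that the two faces
adjacent along any edge of the graph receive different colors. -/
def IsStateColoring (t : M.D → Bool) (n : ℕ) (c : M.D × Bool → Fin n) : Prop :=
  (∀ x, c (M.nextSeg t x) = c x) ∧ (∀ x, c (M.sideMate t x) = c x) ∧
  ∀ d : M.D, c (d, false) ≠ c (d, true)

end CombMap

namespace FourColorAux

open CombMap

/- Small `ZMod 2` facts, proved by `decide`. -/
lemma z2_add_self : ∀ a : ZMod 2, a + a = 0 := by decide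
lemma z2_six : ∀ a b c : ZMod 2, a + b + (b + c) + (c + a) = 0 := by decide
lemma z2_tele : ∀ a b c : ZMod 2, a + c = a + b + (b + c) := by decide
lemma z2_recover : ∀ a b c : ZMod 2, a = a + b + c + (b + c) := by decide
lemma z2_eq_of_add_eq_zero : ∀ a b : ZMod 2, a + b = 0 → b = a := by decide
lemma z2_ite : ∀ a : ZMod 2, a = if a = 1 then 1 else 0 := by decide
lemma z2_not_one : ∀ a : ZMod 2, ¬ a = 1 → a = 0 := by decide
lemma z2_three : (3 : ZMod 2) = 1 := by decide

variable (M : CombMap)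

noncomputable section
open scoped Classical

/-- The "coboundary" map: `u ↦ (d ↦ u d + u (α d))`. -/
def Pmap : (M.D → ZMod 2) →ₗ[ZMod 2] (M.D → ZMod 2) where
  toFun u := fun d => u d + u (M.α d)
  map_add' u v := by funext d; simp [Pi.add_apply]; ring
  map_smul' c u := by funext d; simp [Pi.smul_apply, smul_eq_mul]; ring

/-- The "vertex sum" map: `u ↦ (d ↦ u d + u (σ d) + u (σ² d))`. -/
def Tmap : (M.D → ZMod 2) →ₗ[ZMod 2] (M.D → ZMod 2) where
  toFun u := fun d => u d + u (M.σ d) + u (M.σ (M.σ d))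
  map_add' u v := by funext d; simp [Pi.add_apply]; ring
  map_smul' c u := by funext d; simp [Pi.smul_apply, smul_eq_mul]; ring

/-- Total sum functional. -/
def smap : (M.D → ZMod 2) →ₗ[ZMod 2] ZMod 2 where
  toFun u := ∑ d, u d
  map_add' u v := by simp [Finset.sum_add_distrib]
  map_smul' c u := by simp [Finset.mul_sum, smul_eq_mul]

/-- The submodule of functions invariant under a permutation. -/
def Inv (f : Equiv.Perm M.D) : Submodule (ZMod 2) (M.D → ZMod 2) where
  carrier := {w | ∀ d, w (f d) = w d}
  add_mem' := fun ha hb d => by simp [Pi.add_apply, ha d, hb d]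
  zero_mem' := fun d => rfl
  smul_mem' := fun c w hw d => by simp [Pi.smul_apply, hw d]

variable {M}

lemma inv_zpow {f : Equiv.Perm M.D} {w : M.D → ZMod 2} (hw : ∀ d, w (f d) = w d) :
    ∀ (n : ℤ) (x : M.D), w ((f ^ n) x) = w x := by
  have hinv : ∀ x, w (f⁻¹ x) = w x := fun x => by
    conv_rhs => rw [← Equiv.apply_symm_apply f x]
    rw [hw]; rfl
  intro n
  induction n using Int.induction_on with
  | zero => intro x; simp
  | succ i ih =>
    intro x
    have h : (f ^ ((i : ℤ) + 1)) x = f ((f ^ (i : ℤ)) x) := by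
      rw [add_comm, zpow_add, zpow_one, Equiv.Perm.mul_apply]
    rw [h, hw, ih]
  | pred i ih =>
    intro x
    have h : (f ^ (-(i : ℤ) - 1)) x = f⁻¹ ((f ^ (-(i : ℤ))) x) := by
      rw [sub_eq_add_neg, add_comm, zpow_add, zpow_neg_one, Equiv.Perm.mul_apply]
    rw [h, hinv, ih]

lemma inv_sameCycle {f : Equiv.Perm M.D} {w : M.D → ZMod 2} (hw : ∀ d, w (f d) = w d)
    {a b : M.D} (h : f.SameCycle a b) : w a = w b := by
  obtain ⟨n, rfl⟩ := h; exact (inv_zpow hw n a).symm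

/-- The invariant functions have dimension the number of cycles. -/
lemma finrank_Inv (f : Equiv.Perm M.D) :
    Module.finrank (ZMod 2) (Inv M f) = M.numCycles f := by
  classical
  letI : Fintype (Quotient (M.sameCycleSetoid f)) := Quotient.fintype _
  let e : ↥(Inv M f) ≃ₗ[ZMod 2] (Quotient (M.sameCycleSetoid f) → ZMod 2) :=
    { toFun := fun w => Quotient.lift (w : M.D → ZMod 2)
        (fun a b hab => inv_sameCycle w.2 hab)
      map_add' := fun u v => funext fun q => Quotient.inductionOn q (fun d => rfl)
      map_smul' := fun c u => funext fun q => Quotient.inductionOn q (fun d => rfl)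
      invFun := fun u => ⟨fun d => u (Quotient.mk (M.sameCycleSetoid f) d),
        fun d => congrArg u (Quotient.sound (show f.SameCycle (f d) d from ⟨-1, by simp⟩))⟩
      left_inv := fun w => Subtype.ext (funext fun d => rfl)
      right_inv := fun u => funext fun q => Quotient.inductionOn q (fun d => rfl) }
  rw [e.finrank_eq, Module.finrank_fintype_fun_eq_card, CombMap.numCycles,
    Nat.card_eq_fintype_card]

end
end FourColorAux
namespace FourColorAux
open CombMap
variable {M : CombMap}

noncomputable section
open scoped Classical

lemma sigma2_ne (hcub : M.Cubic) (d : M.D) : M.σ (M.σ d) ≠ d := by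
  intro h
  have h3 := hcub.1 d
  rw [h] at h3
  exact hcub.2 d h3

lemma orbit3 (hcub : M.Cubic) (a b : M.D) :
    M.σ.SameCycle a b ↔ b = a ∨ b = M.σ a ∨ b = M.σ (M.σ a) := by
  constructor
  · rintro ⟨n, rfl⟩
    induction n using Int.induction_on with
    | zero => left; simp
    | succ i ih =>
      have h : (M.σ ^ ((i : ℤ) + 1)) a = M.σ ((M.σ ^ (i : ℤ)) a) := by
        rw [add_comm, zpow_add, zpow_one, Equiv.Perm.mul_apply]
      rw [h]
      rcases ih with h' | h' | h' <;> rw [h']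
      · right; left; rfl
      · right; right; rfl
      · left; exact hcub.1 a
    | pred i ih =>
      have h : (M.σ ^ (-(i : ℤ) - 1)) a = M.σ⁻¹ ((M.σ ^ (-(i : ℤ))) a) := by
        rw [sub_eq_add_neg, add_comm, zpow_add, zpow_neg_one, Equiv.Perm.mul_apply]
      rw [h]
      rcases ih with h' | h' | h' <;> rw [h']
      · right; right
        rw [Equiv.Perm.inv_eq_iff_eq]
        exact (hcub.1 a).symm
      · left; simp
      · right; left
        simp
  · rintro (rfl | rfl | rfl)
    · exact ⟨0, by simp⟩
    · exact ⟨1, by simp⟩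
    · exact ⟨2, by rw [show (2:ℤ) = 1 + 1 from rfl, zpow_add, zpow_one, Equiv.Perm.mul_apply]⟩

end
end FourColorAux
namespace FourColorAux
open CombMap
variable {M : CombMap}

noncomputable section
open scoped Classical

/-- Indicator of the `σ`-orbit of a dart. -/
def indOrb (M : CombMap) (d : M.D) : M.D → ZMod 2 := fun z => if M.σ.SameCycle d z then 1 else 0

lemma indOrb_sigma (d x : M.D) : indOrb M d (M.σ x) = indOrb M d x := by
  simp only [indOrb, Equiv.Perm.sameCycle_apply_right]

lemma indOrb_mem (d : M.D) : indOrb M d ∈ Inv M M.σ := fun x => indOrb_sigma d x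

lemma indOrb_congr {d e : M.D} (h : M.σ.SameCycle d e) : indOrb M d = indOrb M e := by
  funext z
  simp only [indOrb]
  congr 1
  exact propext ⟨fun h' => h.symm.trans h', fun h' => h.trans h'⟩

lemma orbit_filter_eq (hcub : M.Cubic) (d : M.D) :
    Finset.univ.filter (fun z => M.σ.SameCycle d z) = {d, M.σ d, M.σ (M.σ d)} := by
  ext z
  simp [orbit3 hcub]

lemma orbit_card (hcub : M.Cubic) (d : M.D) :
    (Finset.univ.filter (fun z => M.σ.SameCycle d z)).card = 3 := by
  rw [orbit_filter_eq hcub]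
  rw [Finset.card_insert_of_notMem, Finset.card_insert_of_notMem, Finset.card_singleton]
  · simp only [Finset.mem_singleton]
    intro h
    exact hcub.2 d (M.σ.injective h).symm
  · simp only [Finset.mem_insert, Finset.mem_singleton]
    rintro (h | h)
    · exact hcub.2 d h.symm
    · exact sigma2_ne hcub d h.symm

lemma smap_indOrb (hcub : M.Cubic) (d : M.D) : smap M (indOrb M d) = 1 := by
  show (∑ z, indOrb M d z) = 1
  simp only [indOrb]
  rw [Finset.sum_boole, orbit_card hcub]
  exact z2_three

/-- Indicator of an edge (a pair `{x, α x}`). -/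
def indEdge (M : CombMap) (x : M.D) : M.D → ZMod 2 :=
  fun z => (if z = x then 1 else 0) + (if z = M.α x then 1 else 0)

lemma alpha_eq_iff (x z : M.D) : M.α z = x ↔ z = M.α x := by
  constructor
  · intro h; rw [← h, M.α_invol]
  · intro h; rw [h, M.α_invol]

lemma indEdge_mem (x : M.D) : indEdge M x ∈ Inv M M.α := by
  intro z
  show ((if M.α z = x then (1 : ZMod 2) else 0) + if M.α z = M.α x then 1 else 0) = _
  rw [if_congr (alpha_eq_iff x z) rfl rfl]
  rw [if_congr M.α.injective.eq_iff rfl rfl]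
  exact add_comm _ _

lemma three_ind (hcub : M.Cubic) (y z : M.D) :
    ((if z = y then (1 : ZMod 2) else 0) + (if M.σ z = y then 1 else 0) +
      (if M.σ (M.σ z) = y then 1 else 0)) = if M.σ.SameCycle y z then 1 else 0 := by
  by_cases h : M.σ.SameCycle y z
  · rw [if_pos h]
    rw [orbit3 hcub] at h
    rcases h with h | h | h <;> rw [h]
    · rw [if_pos rfl, if_neg (hcub.2 y), if_neg (sigma2_ne hcub y)]
      decide
    · rw [if_neg (hcub.2 y), if_neg (sigma2_ne hcub y), if_pos (hcub.1 y)]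
      decide
    · rw [if_neg (sigma2_ne hcub y), if_pos (hcub.1 y),
        if_neg (fun h' => by rw [hcub.1 (M.σ y)] at h'; exact hcub.2 y h')]
      decide
  · rw [if_neg h,
      if_neg (fun h' : z = y => h ⟨0, by simp only [zpow_zero, Equiv.Perm.one_apply]; exact h'.symm⟩),
      if_neg (fun h' : M.σ z = y => h ⟨-1, by rw [← h']; simp⟩),
      if_neg (fun h' : M.σ (M.σ z) = y => h ⟨-2, by
        rw [← h', show (-2:ℤ) = -1 + -1 from rfl, zpow_add, Equiv.Perm.mul_apply]
        simp⟩)]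
    decide

lemma Tmap_indEdge (hcub : M.Cubic) (x : M.D) :
    Tmap M (indEdge M x) = indOrb M x + indOrb M (M.α x) := by
  funext z
  show (indEdge M x z + indEdge M x (M.σ z) + indEdge M x (M.σ (M.σ z))) = _
  have h1 := three_ind hcub x z
  have h2 := three_ind hcub (M.α x) z
  show _ = indOrb M x z + indOrb M (M.α x) z
  simp only [indOrb, indEdge]
  rw [← h1, ← h2]
  ring

end
end FourColorAux
namespace FourColorAux
open CombMap
variable {M : CombMap}

noncomputable section
open scoped Classical

lemma const_of_conn (hconn : M.Connected) {u : M.D → ZMod 2}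
    (hσ : ∀ d, u (M.σ d) = u d) (hα : ∀ d, u (M.α d) = u d) (a b : M.D) : u a = u b := by
  have h := hconn a b
  induction h with
  | refl => rfl
  | tail h1 hstep ih =>
    rcases hstep with h | h
    · rw [← h, hσ]; exact ih
    · rw [← h, hα]; exact ih

lemma pair_mem_range (hcub : M.Cubic) (hconn : M.Connected) (d e : M.D) :
    indOrb M d + indOrb M e ∈
      LinearMap.range ((Tmap M).domRestrict (Inv M M.α)) := by
  have h := hconn d e
  induction h with
  | refl =>
    have : indOrb M d + indOrb M d = 0 := funext fun z => z2_add_self _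
    rw [this]; exact zero_mem _
  | tail h1 hstep ih =>
    rename_i b c
    have key : indOrb M d + indOrb M c
        = (indOrb M d + indOrb M b) + (indOrb M b + indOrb M c) :=
      funext fun z => z2_tele _ _ _
    rw [key]
    apply add_mem ih
    rcases hstep with h | h
    · have : indOrb M b = indOrb M c := indOrb_congr ⟨1, by simpa using h⟩
      rw [this]
      have : indOrb M c + indOrb M c = 0 := funext fun z => z2_add_self _
      rw [this]; exact zero_mem _
    · have : indOrb M b + indOrb M c = Tmap M (indEdge M b) := by
        rw [Tmap_indEdge hcub, h]
      rw [this]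
      exact ⟨⟨indEdge M b, indEdge_mem b⟩, rfl⟩

lemma mem_range_T (hcub : M.Cubic) (hconn : M.Connected) :
    ∀ u : M.D → ZMod 2, (∀ d, u (M.σ d) = u d) → smap M u = 0 →
      u ∈ LinearMap.range ((Tmap M).domRestrict (Inv M M.α)) := by
  suffices H : ∀ (n : ℕ) (u : M.D → ZMod 2),
      (Finset.univ.filter (fun z => u z = 1)).card = n →
      (∀ d, u (M.σ d) = u d) → smap M u = 0 →
      u ∈ LinearMap.range ((Tmap M).domRestrict (Inv M M.α)) by
    intro u hu hs; exact H _ u rfl hu hs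
  intro n
  induction n using Nat.strong_induction_on with
  | _ n ih =>
    intro u hn hu hs
    by_cases hsupp : Finset.univ.filter (fun z => u z = 1) = ∅
    · have hu0 : u = 0 := by
        funext z
        have hz : z ∉ Finset.univ.filter (fun z => u z = 1) := by rw [hsupp]; exact Finset.notMem_empty _
        simp only [Finset.mem_filter, Finset.mem_univ, true_and] at hz
        exact z2_not_one _ hz
      rw [hu0]; exact zero_mem _
    · obtain ⟨d, hd⟩ := Finset.nonempty_iff_ne_empty.mpr hsupp
      have hud : u d = 1 := by
        simp only [Finset.mem_filter, Finset.mem_univ, true_and] at hd; exact hd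
      have hsum : smap M u = ((Finset.univ.filter (fun z => u z = 1)).card : ZMod 2) := by
        show (∑ z, u z) = _
        rw [← Finset.sum_boole]
        exact Finset.sum_congr rfl fun z _ => z2_ite _
      have hex : ∃ e, u e = 1 ∧ ¬ M.σ.SameCycle d e := by
        by_contra hno
        push_neg at hno
        have heq : Finset.univ.filter (fun z => u z = 1)
            = Finset.univ.filter (fun z => M.σ.SameCycle d z) := by
          ext z
          simp only [Finset.mem_filter, Finset.mem_univ, true_and]
          constructor
          · exact fun h => hno z h
          · intro h
            rw [← inv_sameCycle hu h]
            exact hud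
        rw [hs, heq, orbit_card hcub] at hsum
        have h31 : ((3:ℕ) : ZMod 2) = 1 := by decide
        rw [h31] at hsum
        exact one_ne_zero hsum.symm
      obtain ⟨e, hue, hde⟩ := hex
      set v := u + indOrb M d + indOrb M e with hv
      have hvσ : ∀ x, v (M.σ x) = v x := by
        intro x
        show u (M.σ x) + indOrb M d (M.σ x) + indOrb M e (M.σ x)
            = u x + indOrb M d x + indOrb M e x
        rw [hu, indOrb_sigma, indOrb_sigma]
      have hvs : smap M v = 0 := by
        have : smap M v = smap M u + smap M (indOrb M d) + smap M (indOrb M e) := by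
          rw [hv]; simp [map_add]
        rw [this, hs, smap_indOrb hcub, smap_indOrb hcub]
        decide
      have hsub : Finset.univ.filter (fun z => v z = 1) ⊆ Finset.univ.filter (fun z => u z = 1) := by
        intro z hz
        simp only [Finset.mem_filter, Finset.mem_univ, true_and] at hz ⊢
        by_contra huz
        have huz0 : u z = 0 := by revert huz; generalize u z = a; revert a; decide
        have hdz : indOrb M d z = 0 := by
          simp only [indOrb]
          rw [if_neg]
          intro hsc
          rw [← inv_sameCycle hu hsc, hud] at huz0
          exact one_ne_zero huz0
        have hez : indOrb M e z = 0 := by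
          simp only [indOrb]
          rw [if_neg]
          intro hsc
          rw [← inv_sameCycle hu hsc, hue] at huz0
          exact one_ne_zero huz0
        have : v z = 0 := by show u z + _ + _ = 0; rw [huz0, hdz, hez]; decide
        rw [this] at hz
        exact one_ne_zero hz.symm
      have hdnot : d ∉ Finset.univ.filter (fun z => v z = 1) := by
        simp only [Finset.mem_filter, Finset.mem_univ, true_and]
        have h1 : indOrb M d d = 1 := by
          simp only [indOrb]
          rw [if_pos (Equiv.Perm.SameCycle.refl _ _)]
        have h2 : indOrb M e d = 0 := by
          simp only [indOrb]
          rw [if_neg (fun hsc => hde hsc.symm)]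
        have : v d = 0 := by show u d + _ + _ = 0; rw [hud, h1, h2]; decide
        rw [this]; decide
      have hcard : (Finset.univ.filter (fun z => v z = 1)).card < n := by
        rw [← hn]
        exact Finset.card_lt_card ((Finset.ssubset_iff_of_subset hsub).mpr ⟨d, hd, hdnot⟩)
      have hvmem := ih _ hcard v rfl hvσ hvs
      have hurec : u = v + (indOrb M d + indOrb M e) :=
        funext fun z => z2_recover _ _ _
      rw [hurec]
      exact add_mem hvmem (pair_mem_range hcub hconn d e)

end
end FourColorAux
namespace FourColorAux
open CombMap

noncomputable section
open scoped Classical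
set_option synthInstance.maxHeartbeats 1000000
set_option maxHeartbeats 1000000

lemma phi_apply (M : CombMap) (d : M.D) : M.φ d = M.σ (M.α d) := rfl

lemma phi_alpha (M : CombMap) (d : M.D) : M.φ (M.α d) = M.σ d := by
  rw [phi_apply, M.α_invol]

variable {M : CombMap}

/-- The key planarity lemma: every α-invariant "cycle" function satisfying the
vertex condition is a coboundary of a face function. -/
lemma core (hcub : M.Cubic) (hplanar : M.Planar) [Nonempty M.D]
    (f : M.D → ZMod 2) (hfα : ∀ d, f (M.α d) = f d)
    (hfv : ∀ d, f d + f (M.σ d) + f (M.σ (M.σ d)) = 0) :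
    ∃ g : M.D → ZMod 2, (∀ d, g (M.φ d) = g d) ∧ ∀ d, g d + g (M.α d) = f d := by
  classical
  obtain ⟨hconn, heuler⟩ := hplanar
  set B := Submodule.map (Pmap M) (Inv M M.φ) with hB
  set Z := Inv M M.α ⊓ LinearMap.ker (Tmap M) with hZ
  -- B ≤ Z
  have hBZ : B ≤ Z := by
    rintro w ⟨u, hu, rfl⟩
    have hσα : ∀ y, u (M.σ y) = u (M.α y) := by
      intro y
      rw [← phi_alpha M y]
      exact hu (M.α y)
    constructor
    · intro d
      show u (M.α d) + u (M.α (M.α d)) = u d + u (M.α d)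
      rw [M.α_invol]
      exact add_comm _ _
    · show Tmap M (Pmap M u) = 0
      funext d
      show (u d + u (M.α d)) + (u (M.σ d) + u (M.α (M.σ d))) +
        (u (M.σ (M.σ d)) + u (M.α (M.σ (M.σ d)))) = 0
      rw [← hσα d, ← hσα (M.σ d), ← hσα (M.σ (M.σ d)), hcub.1 d]
      exact z2_six _ _ _
  -- f ∈ Z
  have hfZ : f ∈ Z := by
    constructor
    · exact hfα
    · show Tmap M f = 0
      funext d
      exact hfv d
  -- dimension bookkeeping
  set P' := (Pmap M).domRestrict (Inv M M.φ) with hP'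
  set T' := (Tmap M).domRestrict (Inv M M.α) with hT'
  set s' := (smap M).domRestrict (Inv M M.σ) with hs'
  have hV := finrank_Inv (M := M) M.σ
  have hE := finrank_Inv (M := M) M.α
  have hF := finrank_Inv (M := M) M.φ
  -- rank-nullity for P'
  have hPrn := LinearMap.finrank_range_add_finrank_ker P'
  have hrangeP : LinearMap.range P' = B := LinearMap.range_domRestrict _ _
  -- ker P' has dimension ≤ 1
  have hkerP : Module.finrank (ZMod 2) (LinearMap.ker P') ≤ 1 := by
    obtain ⟨d₀⟩ := ‹Nonempty M.D›
    set L := ((LinearMap.proj d₀ : (M.D → ZMod 2) →ₗ[ZMod 2] ZMod 2).comp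
          ((Inv M M.φ).subtype.comp (LinearMap.ker P').subtype)) with hL
    have hker : LinearMap.ker L = ⊥ := by
      rw [LinearMap.ker_eq_bot']
      rintro ⟨⟨u, huφ⟩, huker⟩ hval
      rw [hL] at hval
      have hPu : ∀ d, u d + u (M.α d) = 0 := by
        intro d
        have h0 : P' ⟨u, huφ⟩ = 0 := huker
        exact congrFun h0 d
      have huα : ∀ d, u (M.α d) = u d := fun d => z2_eq_of_add_eq_zero _ _ (hPu d)
      have huσ : ∀ d, u (M.σ d) = u d := by
        intro d
        rw [← phi_alpha M d, huφ (M.α d), huα]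
      have hconst : ∀ z, u z = u d₀ := fun z => const_of_conn hconn huσ huα z d₀
      have hval' : u d₀ = 0 := hval
      apply Subtype.ext
      apply Subtype.ext
      funext z
      show u z = 0
      rw [hconst z, hval']
    have hinj : Function.Injective L := by
      intro a b hab
      have h0 := LinearMap.ker_eq_bot'.mp hker (a - b) (by have hs := L.map_sub a b; rw [hab, sub_self] at hs; exact hs)
      exact sub_eq_zero.mp h0
    calc Module.finrank (ZMod 2) (LinearMap.ker P')
        ≤ Module.finrank (ZMod 2) (ZMod 2) := LinearMap.finrank_le_finrank_of_injective hinj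
      _ = 1 := Module.finrank_self _
  -- Z = image of ker T' under subtype
  have hZmap : Submodule.map (Inv M M.α).subtype (LinearMap.ker T') = Z := by
    ext w
    constructor
    · rintro ⟨⟨u, huα⟩, huker, rfl⟩
      exact ⟨huα, LinearMap.mem_ker.mp huker⟩
    · rintro ⟨hwα, hwT⟩
      exact ⟨⟨w, hwα⟩, LinearMap.mem_ker.mpr hwT, rfl⟩
  have hZrank : Module.finrank (ZMod 2) Z = Module.finrank (ZMod 2) (LinearMap.ker T') := by
    rw [← hZmap]
    exact (LinearEquiv.finrank_eq
      (Submodule.equivMapOfInjective _ (Submodule.injective_subtype _) (LinearMap.ker T'))).symm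
  -- rank-nullity for T'
  have hTrn := LinearMap.finrank_range_add_finrank_ker T'
  -- U = Inv σ ⊓ ker smap has finrank ≥ V - 1 and is ≤ range T'
  have hUle : Inv M M.σ ⊓ LinearMap.ker (smap M) ≤ LinearMap.range T' := by
    rintro u ⟨huσ, hus⟩
    exact mem_range_T hcub hconn u huσ (LinearMap.mem_ker.mp hus)
  have hUmap : Submodule.map (Inv M M.σ).subtype (LinearMap.ker s')
      = Inv M M.σ ⊓ LinearMap.ker (smap M) := by
    ext w
    constructor
    · rintro ⟨⟨u, huσ⟩, huker, rfl⟩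
      exact ⟨huσ, LinearMap.mem_ker.mpr (LinearMap.mem_ker.mp huker)⟩
    · rintro ⟨hwσ, hws⟩
      exact ⟨⟨w, hwσ⟩, LinearMap.mem_ker.mpr (LinearMap.mem_ker.mp hws), rfl⟩
  have hUrank : Module.finrank (ZMod 2) (Inv M M.σ ⊓ LinearMap.ker (smap M) :
      Submodule (ZMod 2) (M.D → ZMod 2)) = Module.finrank (ZMod 2) (LinearMap.ker s') := by
    rw [← hUmap]
    exact (LinearEquiv.finrank_eq
      (Submodule.equivMapOfInjective _ (Submodule.injective_subtype _) (LinearMap.ker s'))).symm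
  have hsrn := LinearMap.finrank_range_add_finrank_ker s'
  have hrs : Module.finrank (ZMod 2) (LinearMap.range s') ≤ 1 := by
    calc Module.finrank (ZMod 2) (LinearMap.range s')
        ≤ Module.finrank (ZMod 2) (ZMod 2) := Submodule.finrank_le _
      _ = 1 := Module.finrank_self _
  have hUrange : Module.finrank (ZMod 2) (Inv M M.σ ⊓ LinearMap.ker (smap M) :
      Submodule (ZMod 2) (M.D → ZMod 2)) ≤ Module.finrank (ZMod 2) (LinearMap.range T') :=
    Submodule.finrank_mono hUle
  -- conclude finrank Z ≤ finrank B
  have hfin : Module.finrank (ZMod 2) Z ≤ Module.finrank (ZMod 2) B := by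
    rw [hZrank]
    rw [hrangeP] at hPrn
    rw [hUrank] at hUrange
    omega
  have hBeqZ : B = Z := Submodule.eq_of_le_of_finrank_le hBZ hfin
  rw [← hBeqZ] at hfZ
  obtain ⟨u, hu, hPu⟩ := hfZ
  refine ⟨u, hu, fun d => ?_⟩
  exact congrFun hPu d

end
end FourColorAux
namespace FourColorAux
noncomputable section
open scoped Classical

def dec4 : Fin 4 → ZMod 2 × ZMod 2 := ![(0,0),(0,1),(1,0),(1,1)]
lemma dec4_inj : Function.Injective dec4 := by decide
def enc4 : ZMod 2 × ZMod 2 → Fin 4 := fun p =>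
  if p.1 = 0 then (if p.2 = 0 then 0 else 1) else (if p.2 = 0 then 2 else 3)
lemma enc4_inj : Function.Injective enc4 := by decide
lemma zz_pair : ∀ a b : ZMod 2 × ZMod 2, a + b = 0 → a = b := by decide
lemma zz_six : ∀ a b c : ZMod 2 × ZMod 2, (a + b) + (b + c) + (c + a) = 0 := by decide

end
end FourColorAux

/-- If any state graph of a connected cubic plane graph `M` (obtained by inserting
half-twists in an arbitrary set of edge bands and capping the boundary circles with
disks) admits a proper 4-face-coloring, then `M` itself admits a proper
4-face-coloring. -/
theorem four_colorable_of_state_four_colorable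
    (M : CombMap) (hcub : M.Cubic) (hplanar : M.Planar)
    (t : M.D → Bool) (ht : ∀ d, t (M.α d) = t d)
    (h : ∃ c : M.D × Bool → Fin 4, M.IsStateColoring t 4 c) :
    ∃ c : M.D → Fin 4, M.FaceColoring 4 c := by
  classical
  rcases isEmpty_or_nonempty M.D with hemp | hne
  · exact ⟨fun _ => 0, fun d => hemp.elim d, fun d => hemp.elim d⟩
  obtain ⟨c, hc1, hc2, hc3⟩ := h
  have key1 : ∀ d b, c (M.α d, Bool.xor b (!(t d))) = c (d, b) := fun d b => hc2 (d, b)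
  have key1f : ∀ d, c (M.α d, false) = c (d, !(t d)) := by
    intro d
    have h' := key1 d (!(t d))
    rwa [Bool.xor_self] at h'
  have key1t : ∀ d, c (M.α d, true) = c (d, t d) := by
    intro d
    have h' := key1 d (t d)
    rwa [Bool.xor_not_self] at h'
  have key2 : ∀ d, c (M.σ d, false) = c (d, true) := by
    intro d
    have h1 := hc1 (M.sideMate t (d, true))
    have h2 := hc2 (d, true)
    rw [h2] at h1
    have e1 : M.nextSeg t (M.sideMate t (d, true)) = (M.σ d, false) := by
      cases htd : t d <;>
        simp [CombMap.sideMate, CombMap.nextSeg, ht, htd, M.α_invol]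
    rwa [e1] at h1
  set fK : M.D → ZMod 2 × ZMod 2 :=
    fun d => FourColorAux.dec4 (c (d, false)) + FourColorAux.dec4 (c (d, true)) with hfK
  have hfα : ∀ d, fK (M.α d) = fK d := by
    intro d
    show FourColorAux.dec4 (c (M.α d, false)) + FourColorAux.dec4 (c (M.α d, true))
      = FourColorAux.dec4 (c (d, false)) + FourColorAux.dec4 (c (d, true))
    rw [key1f, key1t]
    cases htd : t d
    · simp only [Bool.not_false]
      exact add_comm _ _
    · simp only [Bool.not_true]
  have hf0 : ∀ d, fK d ≠ 0 := by
    intro d h0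
    exact hc3 d (FourColorAux.dec4_inj (FourColorAux.zz_pair _ _ h0))
  have hfv : ∀ d, fK d + fK (M.σ d) + fK (M.σ (M.σ d)) = 0 := by
    intro d
    have k0 : c (d, true) = c (M.σ d, false) := (key2 d).symm
    have k1 : c (M.σ d, true) = c (M.σ (M.σ d), false) := (key2 (M.σ d)).symm
    have k2 : c (M.σ (M.σ d), true) = c (d, false) := by
      have h' := key2 (M.σ (M.σ d))
      rw [hcub.1 d] at h'
      exact h'.symm
    show (FourColorAux.dec4 (c (d, false)) + FourColorAux.dec4 (c (d, true)))
        + (FourColorAux.dec4 (c (M.σ d, false)) + FourColorAux.dec4 (c (M.σ d, true)))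
        + (FourColorAux.dec4 (c (M.σ (M.σ d), false)) + FourColorAux.dec4 (c (M.σ (M.σ d), true)))
        = 0
    rw [k0, k1, k2]
    exact FourColorAux.zz_six _ _ _
  haveI := hne
  obtain ⟨g1, hg1φ, hg1⟩ := FourColorAux.core hcub hplanar (fun d => (fK d).1)
    (fun d => congrArg Prod.fst (hfα d)) (fun d => congrArg Prod.fst (hfv d))
  obtain ⟨g2, hg2φ, hg2⟩ := FourColorAux.core hcub hplanar (fun d => (fK d).2)
    (fun d => congrArg Prod.snd (hfα d)) (fun d => congrArg Prod.snd (hfv d))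
  refine ⟨fun d => FourColorAux.enc4 (g1 d, g2 d), fun d => ?_, fun d => ?_⟩
  · show FourColorAux.enc4 (g1 (M.φ d), g2 (M.φ d)) = FourColorAux.enc4 (g1 d, g2 d)
    rw [hg1φ d, hg2φ d]
  · intro heq
    have hpair : (g1 d, g2 d) = (g1 (M.α d), g2 (M.α d)) := FourColorAux.enc4_inj heq
    have h1 : g1 d = g1 (M.α d) := congrArg Prod.fst hpair
    have h2 : g2 d = g2 (M.α d) := congrArg Prod.snd hpair
    apply hf0 d
    have e1 : (fK d).1 = 0 := by
      rw [← hg1 d, ← h1]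
      exact FourColorAux.z2_add_self _
    have e2 : (fK d).2 = 0 := by
      rw [← hg2 d, ← h2]
      exact FourColorAux.z2_add_self _
    exact Prod.ext e1 e2
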